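/- arXiv:2507.17458 — 2 statements merged into one kernel-verified Lean document; each statement's English description precedes it below -/
import Mathlib

section
/- If an item x falls in the bucket with index i of a sketch with parameter γ (i.e., γ^{i-1} < x ≤ γ^i), then x falls in the bucket with index ⌈i/2⌉ of the collapsed sketch with parameter γ² (i.e., (γ²)^{⌈i/2⌉-1} < x ≤ (γ²)^{⌈i/2⌉}). -/
theorem collapse_bucket_mapping (γ x : ℝ) (i : ℤ) (hγ : 1 < γ) (hx : 0 < x)
    (hlo : γ ^ (i - 1) < x) (hhi : x ≤ γ ^ i) :
    (γ ^ 2) ^ (⌈(i : ℚ) / 2⌉ - 1) < x ∧ x ≤ (γ ^ 2) ^ ⌈(i : ℚ) / 2⌉ := by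
  set j : ℤ := ⌈(i : ℚ) / 2⌉ with hj
  have h1 : (i : ℚ) / 2 ≤ (j : ℚ) := Int.le_ceil _
  have h2 : (j : ℚ) < (i : ℚ) / 2 + 1 := Int.ceil_lt_add_one _
  have hij : i ≤ 2 * j := by
    have h3 : (i : ℚ) ≤ 2 * j := by linarith
    exact_mod_cast h3
  have hji : 2 * j ≤ i + 1 := by
    have h4 : (2 * j : ℚ) < i + 2 := by linarith
    have h5 : (2 * j : ℤ) < i + 2 := by exact_mod_cast h4
    omega
  have hpow : ∀ k : ℤ, (γ ^ 2) ^ k = γ ^ (2 * k) := by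
    intro k
    rw [← zpow_natCast γ 2, ← zpow_mul]
    norm_num
  have hγ0 : (0:ℝ) < γ := lt_trans zero_lt_one hγ
  constructor
  · rw [hpow]
    calc γ ^ (2 * (j - 1)) ≤ γ ^ (i - 1) := by
          apply zpow_le_zpow_right₀ hγ.le
          omega
      _ < x := hlo
  · rw [hpow]
    calc x ≤ γ ^ i := hhi
      _ ≤ γ ^ (2 * j) := by
          apply zpow_le_zpow_right₀ hγ.le
          omega
end

section
/- Let γ > 1 and suppose all inputs lie in [x_min, x_max] ⊆ ℝ_{>0}. If γ ≥ (x_max/x_min)^{1/(m-1)} for an integer m ≥ 2, then the number of distinct bucket indices ⌈log_γ x⌉ over x ∈ [x_min, x_max] is at most m. -/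
theorem bucket_count_bound (γ xmin xmax : ℝ) (m : ℕ)
    (hγ : 1 < γ) (hmin : 0 < xmin) (hle : xmin ≤ xmax) (hm : 2 ≤ m)
    (hγbig : (xmax / xmin) ^ ((1 : ℝ) / (m - 1)) ≤ γ) :
    {n : ℤ | ∃ x ∈ Set.Icc xmin xmax, n = ⌈Real.logb γ x⌉}.ncard ≤ m := by
  have hxmax : 0 < xmax := lt_of_lt_of_le hmin hle
  have hr : (0:ℝ) < xmax / xmin := div_pos hxmax hmin
  have hm1 : (0:ℝ) < (m:ℝ) - 1 := by
    have : (2:ℝ) ≤ m := by exact_mod_cast hm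
    linarith
  -- xmax / xmin ≤ γ ^ ((m:ℝ) - 1)
  have hpow : xmax / xmin ≤ γ ^ ((m:ℝ) - 1) := by
    have h1 : ((xmax / xmin) ^ ((1:ℝ)/((m:ℝ)-1))) ^ ((m:ℝ)-1) ≤ γ ^ ((m:ℝ)-1) :=
      Real.rpow_le_rpow (Real.rpow_nonneg hr.le _) hγbig hm1.le
    rwa [← Real.rpow_mul hr.le, one_div,
      inv_mul_cancel₀ hm1.ne', Real.rpow_one] at h1
    -- note: rpow_natCast may not apply; handled below if needed
  have hlog : Real.logb γ xmax ≤ Real.logb γ xmin + ((m:ℝ) - 1) := by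
    have h2 : Real.logb γ (xmax / xmin) ≤ (m:ℝ) - 1 := by
      rw [Real.logb_le_iff_le_rpow hγ hr]
      exact hpow
    rw [Real.logb_div hxmax.ne' hmin.ne'] at h2
    linarith
  set a := ⌈Real.logb γ xmin⌉ with ha
  have hsub : {n : ℤ | ∃ x ∈ Set.Icc xmin xmax, n = ⌈Real.logb γ x⌉} ⊆
      Set.Icc a (a + ((m:ℤ) - 1)) := by
    rintro n ⟨x, ⟨hx1, hx2⟩, rfl⟩
    have hxpos : 0 < x := lt_of_lt_of_le hmin hx1
    constructor
    · exact Int.ceil_le_ceil (Real.logb_le_logb_of_le hγ hmin hx1)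
    · have h3 : Real.logb γ x ≤ Real.logb γ xmin + ((m:ℤ) - 1 : ℤ) := by
        have := Real.logb_le_logb_of_le hγ hxpos hx2
        push_cast
        linarith
      calc ⌈Real.logb γ x⌉ ≤ ⌈Real.logb γ xmin + ((m:ℤ) - 1 : ℤ)⌉ := Int.ceil_le_ceil h3
        _ = a + ((m:ℤ) - 1) := by rw [Int.ceil_add_intCast]
  have hcard : (Set.Icc a (a + ((m:ℤ) - 1))).ncard = m := by
    rw [← Finset.coe_Icc, Set.ncard_coe_finset, Int.card_Icc]
    have h2 : (2:ℤ) ≤ m := by exact_mod_cast hm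
    omega
  calc _ ≤ (Set.Icc a (a + ((m:ℤ) - 1))).ncard :=
        Set.ncard_le_ncard hsub (Set.finite_Icc _ _)
    _ = m := hcard
end
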